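/- Let (g^k_{α,β}) be a family of mass-migration rates, set Σ^k_{α,β} := Σ_{k'=k+1}^{α} g^{k'}_{α,β}, and let G^{k,l}_{α,β,γ,δ} be the coupling rates. Then for all α, β, γ, δ ∈ ℕ, Σ_{k=0}^{α} Σ_{l=0}^{γ} |k−l|·G^{k,l}_{α,β,γ,δ} ≤ 2·Σ_{i=1}^{max(α,γ)} i·|g^i_{α,β} − g^i_{γ,δ}|. In particular, if the rates satisfy condition (C2) with constant C, then Σ_{k=0}^{α} Σ_{l=0}^{γ} |k−l|·G^{k,l}_{α,β,γ,δ} ≤ 2C·(|α−γ| + |β−δ|). -/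

import Mathlib

/-- Tail sums of the rates: `Σ^k_{α,β} = Σ_{k' = k+1}^{α} g^{k'}_{α,β}`. -/
def Sig (g : ℕ → ℕ → ℕ → ℝ) (k α β : ℕ) : ℝ :=
  ∑ k' ∈ Finset.Icc (k + 1) α, g k' α β

/-- The coupling rates `G^{k,l}_{α,β,γ,δ}` of the mass migration process. -/
def Gc (g : ℕ → ℕ → ℕ → ℝ) (k l α β γ δ : ℕ) : ℝ :=
  if k = 0 then
    (if l = 0 then 0 else
      g l γ δ - min (g l γ δ)
        (Sig g 0 α β - min (Sig g 0 α β) (Sig g l γ δ)))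
  else if l = 0 then
    g k α β - min (g k α β)
      (Sig g 0 γ δ - min (Sig g 0 γ δ) (Sig g k α β))
  else
    min
      (g k α β - min (g k α β)
        (Sig g l γ δ - min (Sig g l γ δ) (Sig g k α β)))
      (g l γ δ - min (g l γ δ)
        (Sig g k α β - min (Sig g k α β) (Sig g l γ δ)))

open Finset

set_option maxHeartbeats 1000000 in
lemma R1 (a A b B : ℝ) (ha : 0 ≤ a) (hA : 0 ≤ A) (hb : 0 ≤ b) (hB : 0 ≤ B) :
    min (a - min a (B - min B A)) (b - min b (A - min A B))
      = min (a + A) (max A (b + B)) - min (a + A) (max A B) := by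
  rcases le_total A B with h1 | h1 <;> rcases le_total a A with h2 | h2 <;>
  simp only [min_def, max_def] <;> split_ifs <;> linarith

lemma R2 (a A c : ℝ) :
    a - min a (c - min c A) = (a + A) - min (a + A) (max A c) := by
  simp only [min_def, max_def]; split_ifs <;> linarith

lemma R3 (a A t : ℝ) (ha : 0 ≤ a) :
    (a + A) - min (a + A) (max A t) = max (a + A) t - max A t := by
  simp only [min_def, max_def]; split_ifs <;> linarith

variable {g : ℕ → ℕ → ℕ → ℝ}

lemma Sig_nonneg (hgnn : ∀ k α β : ℕ, 0 ≤ g k α β) (k α β : ℕ) : 0 ≤ Sig g k α β :=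
  Finset.sum_nonneg fun i _ => hgnn i α β

lemma Sig_eq_zero {k α : ℕ} (h : α ≤ k) (β : ℕ) : Sig g k α β = 0 := by
  unfold Sig
  rw [Finset.Icc_eq_empty (by omega), Finset.sum_empty]

lemma Sig_succ (hgz : ∀ k α β : ℕ, α < k ∨ α = 0 → g k α β = 0) (k α β : ℕ) :
    Sig g k α β = g (k + 1) α β + Sig g (k + 1) α β := by
  by_cases h : k + 1 ≤ α
  · unfold Sig
    rw [show Finset.Icc (k + 1) α = insert (k + 1) (Finset.Icc (k + 2) α) by
      ext x; simp; omega]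
    rw [Finset.sum_insert (by simp)]
  · rw [Sig_eq_zero (by omega), Sig_eq_zero (by omega), hgz (k + 1) α β (Or.inl (by omega))]
    ring

lemma rowsum (hgnn : ∀ k α β : ℕ, 0 ≤ g k α β)
    (hgz : ∀ k α β : ℕ, α < k ∨ α = 0 → g k α β = 0) (α β γ δ j : ℕ) :
    ∑ k ∈ Icc (j + 1) α, ∑ l ∈ range (min (j + 1) (γ + 1)), Gc g k l α β γ δ
      = max (Sig g j α β) (Sig g j γ δ) - Sig g j γ δ := by
  have hBm : Sig g (min j γ) γ δ = Sig g j γ δ := by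
    rcases le_total j γ with h | h
    · rw [min_eq_left h]
    · rw [min_eq_right h, Sig_eq_zero (le_refl γ), Sig_eq_zero h]
  have inner : ∀ k' : ℕ,
      ∑ l ∈ range (min (j + 1) (γ + 1)), Gc g (k' + 1) l α β γ δ
        = max (Sig g k' α β) (Sig g j γ δ) - max (Sig g (k' + 1) α β) (Sig g j γ δ) := by
    intro k'
    have hm : min (j + 1) (γ + 1) = min j γ + 1 := by omega
    rw [hm, Finset.sum_range_succ']
    have hterm : ∀ i : ℕ, Gc g (k' + 1) (i + 1) α β γ δ
        = min (Sig g k' α β) (max (Sig g (k' + 1) α β) (Sig g i γ δ))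
          - min (Sig g k' α β) (max (Sig g (k' + 1) α β) (Sig g (i + 1) γ δ)) := by
      intro i
      unfold Gc
      simp only [Nat.succ_ne_zero, if_false]
      rw [R1 _ _ _ _ (hgnn _ _ _) (Sig_nonneg hgnn _ _ _) (hgnn _ _ _) (Sig_nonneg hgnn _ _ _)]
      rw [← Sig_succ hgz k' α β, ← Sig_succ hgz i γ δ]
    have h0 : Gc g (k' + 1) 0 α β γ δ
        = Sig g k' α β - min (Sig g k' α β) (max (Sig g (k' + 1) α β) (Sig g 0 γ δ)) := by
      unfold Gc
      simp only [Nat.succ_ne_zero, if_false, reduceIte]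
      rw [R2, ← Sig_succ hgz k' α β]
    rw [Finset.sum_congr rfl (fun i _ => hterm i), h0,
      Finset.sum_range_sub' (f := fun i =>
        min (Sig g k' α β) (max (Sig g (k' + 1) α β) (Sig g i γ δ))), hBm]
    have h3 : Sig g k' α β - min (Sig g k' α β) (max (Sig g (k' + 1) α β) (Sig g j γ δ))
        = max (Sig g k' α β) (Sig g j γ δ) - max (Sig g (k' + 1) α β) (Sig g j γ δ) := by
      have h := R3 (g (k' + 1) α β) (Sig g (k' + 1) α β) (Sig g j γ δ) (hgnn _ _ _)
      rw [← Sig_succ hgz k' α β] at h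
      exact h
    linarith [h3]
  rw [show Icc (j + 1) α = Ico (j + 1) (α + 1) by ext x; simp,
    Finset.sum_Ico_eq_sum_range]
  have hn : α + 1 - (j + 1) = α - j := by omega
  rw [hn]
  set F : ℕ → ℝ := fun i => max (Sig g (j + i) α β) (Sig g j γ δ) with hF
  have hre : ∀ i ∈ range (α - j),
      (∑ l ∈ range (min (j + 1) (γ + 1)), Gc g (j + 1 + i) l α β γ δ) = F i - F (i + 1) := by
    intro i _
    rw [show j + 1 + i = (j + i) + 1 by omega]
    exact inner (j + i)
  rw [Finset.sum_congr rfl hre, Finset.sum_range_sub' F]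
  have hz : Sig g (j + (α - j)) α β = 0 := Sig_eq_zero (by omega) β
  simp only [hF, Nat.add_zero, hz]
  rw [max_eq_right (Sig_nonneg hgnn j γ δ)]

lemma Gc_nonneg (k l α β γ δ : ℕ) : 0 ≤ Gc g k l α β γ δ := by
  unfold Gc
  split_ifs
  · exact le_refl 0
  · exact sub_nonneg.mpr (min_le_left _ _)
  · exact sub_nonneg.mpr (min_le_left _ _)
  · exact le_min (sub_nonneg.mpr (min_le_left _ _)) (sub_nonneg.mpr (min_le_left _ _))

lemma Gc_symm (k l α β γ δ : ℕ) : Gc g k l α β γ δ = Gc g l k γ δ α β := by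
  unfold Gc
  by_cases hk : k = 0 <;> by_cases hl : l = 0 <;> simp [hk, hl, min_comm]

lemma colsum (hgnn : ∀ k α β : ℕ, 0 ≤ g k α β)
    (hgz : ∀ k α β : ℕ, α < k ∨ α = 0 → g k α β = 0) (α β γ δ j : ℕ) :
    ∑ l ∈ Icc (j + 1) γ, ∑ k ∈ range (min (j + 1) (α + 1)), Gc g k l α β γ δ
      = max (Sig g j γ δ) (Sig g j α β) - Sig g j α β := by
  rw [← rowsum hgnn hgz γ δ α β j]
  exact Finset.sum_congr rfl fun l _ => Finset.sum_congr rfl fun k _ => Gc_symm k l α β γ δ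

lemma part1 (hgnn : ∀ k α β : ℕ, 0 ≤ g k α β)
    (hgz : ∀ k α β : ℕ, α < k ∨ α = 0 → g k α β = 0) (α β γ δ : ℕ) :
    ∑ k ∈ Finset.range (α + 1), ∑ l ∈ Finset.range (γ + 1),
        |(k : ℝ) - (l : ℝ)| * Gc g k l α β γ δ
      ≤ 2 * ∑ i ∈ Finset.Icc 1 (max α γ), (i : ℝ) * |g i α β - g i γ δ| := by
  set N := max α γ with hN
  -- indicator representation of naturals ≤ N
  have hrep : ∀ k : ℕ, k ≤ N → (k : ℝ) = ∑ j ∈ Icc 1 N, (if j ≤ k then (1 : ℝ) else 0) := by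
    intro k hk
    rw [Finset.sum_boole]
    rw [show (Icc 1 N).filter (fun j => j ≤ k) = Icc 1 k by ext x; simp; omega]
    rw [Nat.card_Icc]
    norm_num
  -- Step A: bound |k - l| * G by the indicator sum
  have stepA : ∑ k ∈ Finset.range (α + 1), ∑ l ∈ Finset.range (γ + 1),
        |(k : ℝ) - (l : ℝ)| * Gc g k l α β γ δ
      ≤ ∑ j ∈ Icc 1 N, ∑ k ∈ Finset.range (α + 1), ∑ l ∈ Finset.range (γ + 1),
          |(if j ≤ k then (1 : ℝ) else 0) - (if j ≤ l then (1 : ℝ) else 0)|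
            * Gc g k l α β γ δ := by
    rw [Finset.sum_comm (s := Icc 1 N)]
    apply Finset.sum_le_sum
    intro k hk
    rw [Finset.sum_comm (s := Icc 1 N)]
    apply Finset.sum_le_sum
    intro l hl
    rw [← Finset.sum_mul]
    apply mul_le_mul_of_nonneg_right _ (Gc_nonneg k l α β γ δ)
    calc |(k : ℝ) - (l : ℝ)|
        = |∑ j ∈ Icc 1 N, ((if j ≤ k then (1 : ℝ) else 0) - (if j ≤ l then (1 : ℝ) else 0))| := by
          rw [Finset.sum_sub_distrib, ← hrep k (by simp at hk; omega), ← hrep l (by simp at hl; omega)]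
      _ ≤ _ := Finset.abs_sum_le_sum_abs _ _
  refine le_trans stepA ?_
  -- Step B: evaluate the inner double sums
  have stepB : ∀ i : ℕ, ∑ k ∈ Finset.range (α + 1), ∑ l ∈ Finset.range (γ + 1),
        |(if i + 1 ≤ k then (1 : ℝ) else 0) - (if i + 1 ≤ l then (1 : ℝ) else 0)|
          * Gc g k l α β γ δ
      = |Sig g i α β - Sig g i γ δ| := by
    intro i
    have hsplit : ∀ k l : ℕ,
        |(if i + 1 ≤ k then (1 : ℝ) else 0) - (if i + 1 ≤ l then (1 : ℝ) else 0)|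
            * Gc g k l α β γ δ
          = (if i + 1 ≤ k then (if i + 1 ≤ l then 0 else Gc g k l α β γ δ) else 0)
            + (if i + 1 ≤ l then (if i + 1 ≤ k then 0 else Gc g k l α β γ δ) else 0) := by
      intro k l
      by_cases h1 : i + 1 ≤ k <;> by_cases h2 : i + 1 ≤ l <;> simp [h1, h2]
    simp only [hsplit, Finset.sum_add_distrib]
    have hpart1 : ∑ k ∈ Finset.range (α + 1), ∑ l ∈ Finset.range (γ + 1),
          (if i + 1 ≤ k then (if i + 1 ≤ l then 0 else Gc g k l α β γ δ) else 0)
        = max (Sig g i α β) (Sig g i γ δ) - Sig g i γ δ := by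
      rw [← rowsum hgnn hgz α β γ δ i]
      rw [Finset.sum_congr rfl (fun k _ => by
        by_cases h : i + 1 ≤ k <;>
          simp only [h, if_true, if_false, Finset.sum_const_zero] :
        ∀ k ∈ Finset.range (α + 1), (∑ l ∈ Finset.range (γ + 1),
          if i + 1 ≤ k then (if i + 1 ≤ l then 0 else Gc g k l α β γ δ) else 0)
        = if i + 1 ≤ k then (∑ l ∈ Finset.range (γ + 1),
            if i + 1 ≤ l then 0 else Gc g k l α β γ δ) else 0)]
      rw [← Finset.sum_filter,
        show (Finset.range (α + 1)).filter (fun k => i + 1 ≤ k) = Icc (i + 1) α by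
          ext x; simp; omega]
      apply Finset.sum_congr rfl
      intro k _
      rw [show (fun l => if i + 1 ≤ l then (0:ℝ) else Gc g k l α β γ δ)
          = (fun l => if ¬ (i + 1 ≤ l) then Gc g k l α β γ δ else 0) from by
            funext l; by_cases h : i + 1 ≤ l <;> simp [h]]
      rw [← Finset.sum_filter,
        show (Finset.range (γ + 1)).filter (fun l => ¬ (i + 1 ≤ l))
            = range (min (i + 1) (γ + 1)) by ext x; simp; omega]
    have hpart2 : ∑ k ∈ Finset.range (α + 1), ∑ l ∈ Finset.range (γ + 1),
          (if i + 1 ≤ l then (if i + 1 ≤ k then 0 else Gc g k l α β γ δ) else 0)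
        = max (Sig g i γ δ) (Sig g i α β) - Sig g i α β := by
      rw [Finset.sum_comm, ← colsum hgnn hgz α β γ δ i]
      rw [Finset.sum_congr rfl (fun l _ => by
        by_cases h : i + 1 ≤ l <;>
          simp only [h, if_true, if_false, Finset.sum_const_zero] :
        ∀ l ∈ Finset.range (γ + 1), (∑ k ∈ Finset.range (α + 1),
          if i + 1 ≤ l then (if i + 1 ≤ k then 0 else Gc g k l α β γ δ) else 0)
        = if i + 1 ≤ l then (∑ k ∈ Finset.range (α + 1),
            if i + 1 ≤ k then 0 else Gc g k l α β γ δ) else 0)]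
      rw [← Finset.sum_filter,
        show (Finset.range (γ + 1)).filter (fun l => i + 1 ≤ l) = Icc (i + 1) γ by
          ext x; simp; omega]
      apply Finset.sum_congr rfl
      intro l _
      rw [show (fun k => if i + 1 ≤ k then (0:ℝ) else Gc g k l α β γ δ)
          = (fun k => if ¬ (i + 1 ≤ k) then Gc g k l α β γ δ else 0) from by
            funext k; by_cases h : i + 1 ≤ k <;> simp [h]]
      rw [← Finset.sum_filter,
        show (Finset.range (α + 1)).filter (fun k => ¬ (i + 1 ≤ k))
            = range (min (i + 1) (α + 1)) by ext x; simp; omega]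
    rw [hpart1, hpart2]
    rcases le_total (Sig g i α β) (Sig g i γ δ) with h | h
    · rw [max_eq_right h, max_eq_left h, abs_of_nonpos (by linarith)]
      ring
    · rw [max_eq_left h, max_eq_right h, abs_of_nonneg (by linarith)]
      ring
  -- Step C: reindex j over Icc 1 N and bound by tail sums
  conv_lhs => rw [show Icc 1 N = Ico 1 (N + 1) by ext x; simp,
    Finset.sum_Ico_eq_sum_range, show N + 1 - 1 = N by omega]
  have stepC : ∀ i ∈ range N,
      (∑ k ∈ Finset.range (α + 1), ∑ l ∈ Finset.range (γ + 1),
        |(if 1 + i ≤ k then (1 : ℝ) else 0) - (if 1 + i ≤ l then (1 : ℝ) else 0)|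
          * Gc g k l α β γ δ)
      ≤ ∑ i' ∈ Icc (i + 1) N, |g i' α β - g i' γ δ| := by
    intro i _
    rw [show 1 + i = i + 1 by omega, stepB i]
    have hA : Sig g i α β = ∑ i' ∈ Icc (i + 1) N, g i' α β := by
      apply Finset.sum_subset
      · apply Finset.Icc_subset_Icc_right; omega
      · intro x hx hx'
        simp at hx hx'
        exact hgz x α β (Or.inl (by omega))
    have hB : Sig g i γ δ = ∑ i' ∈ Icc (i + 1) N, g i' γ δ := by
      apply Finset.sum_subset
      · apply Finset.Icc_subset_Icc_right; omega
      · intro x hx hx'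
        simp at hx hx'
        exact hgz x γ δ (Or.inl (by omega))
    rw [hA, hB, ← Finset.sum_sub_distrib]
    exact Finset.abs_sum_le_sum_abs _ _
  refine le_trans (Finset.sum_le_sum stepC) ?_
  -- Step D: swap and count
  have stepD : ∑ i ∈ range N, ∑ i' ∈ Icc (i + 1) N, |g i' α β - g i' γ δ|
      = ∑ i' ∈ Icc 1 N, (i' : ℝ) * |g i' α β - g i' γ δ| := by
    rw [Finset.sum_comm' (t' := Icc 1 N) (s' := fun i' => range i')
      (h := by intro x y; simp; omega)]
    apply Finset.sum_congr rfl
    intro i' _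
    rw [Finset.sum_const, Finset.card_range, nsmul_eq_mul]
  rw [stepD, two_mul]
  have hpos : 0 ≤ ∑ i' ∈ Icc 1 N, (i' : ℝ) * |g i' α β - g i' γ δ| :=
    Finset.sum_nonneg fun i' _ => mul_nonneg (by positivity) (abs_nonneg _)
  linarith

/-- key estimate on the coupling rates. -/
theorem stmt12
    (g : ℕ → ℕ → ℕ → ℝ)
    (hgnn : ∀ k α β : ℕ, 0 ≤ g k α β)
    (hg0 : ∀ α β : ℕ, g 0 α β = 0)
    (hgz : ∀ k α β : ℕ, α < k ∨ α = 0 → g k α β = 0) :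
    (∀ α β γ δ : ℕ,
      ∑ k ∈ Finset.range (α + 1), ∑ l ∈ Finset.range (γ + 1),
          |(k : ℝ) - (l : ℝ)| * Gc g k l α β γ δ
        ≤ 2 * ∑ i ∈ Finset.Icc 1 (max α γ), (i : ℝ) * |g i α β - g i γ δ|) ∧
    (∀ C : ℝ, 0 < C →
      (∀ α β γ δ : ℕ,
        ∑ k ∈ Finset.Icc 1 (max α γ), (k : ℝ) * |g k α β - g k γ δ|
          ≤ C * (|(α : ℝ) - (γ : ℝ)| + |(β : ℝ) - (δ : ℝ)|)) →
      ∀ α β γ δ : ℕ,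
        ∑ k ∈ Finset.range (α + 1), ∑ l ∈ Finset.range (γ + 1),
            |(k : ℝ) - (l : ℝ)| * Gc g k l α β γ δ
          ≤ 2 * C * (|(α : ℝ) - (γ : ℝ)| + |(β : ℝ) - (δ : ℝ)|)) := by
  constructor
  · exact fun α β γ δ => part1 hgnn hgz α β γ δ
  · intro C hC h α β γ δ
    calc ∑ k ∈ Finset.range (α + 1), ∑ l ∈ Finset.range (γ + 1),
          |(k : ℝ) - (l : ℝ)| * Gc g k l α β γ δ
        ≤ 2 * ∑ i ∈ Finset.Icc 1 (max α γ), (i : ℝ) * |g i α β - g i γ δ| :=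
          part1 hgnn hgz α β γ δ
      _ ≤ 2 * (C * (|(α : ℝ) - (γ : ℝ)| + |(β : ℝ) - (δ : ℝ)|)) := by
          linarith [h α β γ δ]
      _ = 2 * C * (|(α : ℝ) - (γ : ℝ)| + |(β : ℝ) - (δ : ℝ)|) := by ring
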